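/- Let n ≥ 1, let C ⊆ 𝔽₃ⁿ, and let H₀ ⊆ 𝔽₃ⁿ be an affine hyperplane with C ∩ H₀ = ∅. Let H₁, H₂ be the two affine hyperplanes parallel to H₀ and suppose that for i = 1, 2 there is an affine bijection φᵢ : 𝔽₃ⁿ⁻¹ → Hᵢ such that φᵢ⁻¹(C ∩ Hᵢ) is a greedy capset in 𝔽₃ⁿ⁻¹. Then C is a greedy capset in 𝔽₃ⁿ. -/

import Mathlib

/-- A line in `𝔽₃ⁿ`: a coset of a one-dimensional linear subspace. -/
def IsLine {n : ℕ} (L : Set (Fin n → ZMod 3)) : Prop :=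
  ∃ p v : Fin n → ZMod 3, v ≠ 0 ∧ L = {x | ∃ t : ZMod 3, x = p + t • v}

/-- A capset: a subset of `𝔽₃ⁿ` containing no line. -/
def IsCapset {n : ℕ} (C : Set (Fin n → ZMod 3)) : Prop :=
  ∀ L : Set (Fin n → ZMod 3), IsLine L → ¬ L ⊆ C

/-- `lineDeg S P`: the number of lines through `P` that are contained in `S`. -/
noncomputable def lineDeg {n : ℕ} (S : Set (Fin n → ZMod 3)) (P : Fin n → ZMod 3) : ℕ :=
  Set.ncard {L : Set (Fin n → ZMod 3) | IsLine L ∧ P ∈ L ∧ L ⊆ S}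

/-- The sequence of sets in a greedy construction removing the points `P 0, P 1, …`. -/
def greedySeq {n : ℕ} (P : ℕ → (Fin n → ZMod 3)) : ℕ → Set (Fin n → ZMod 3)
  | 0 => Set.univ
  | (i+1) => greedySeq P i \ {P i}

/-- A greedy capset: a capset obtained from `𝔽₃ⁿ` by successively removing a point whose
number of lines through it contained in the remaining set is positive and maximal,
until the remaining set is a capset. -/
def IsGreedyCapset {n : ℕ} (C : Set (Fin n → ZMod 3)) : Prop :=
  ∃ (k : ℕ) (P : ℕ → (Fin n → ZMod 3)),
    (∀ i < k, P i ∈ greedySeq P i ∧ 0 < lineDeg (greedySeq P i) (P i) ∧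
      ∀ Q ∈ greedySeq P i, lineDeg (greedySeq P i) Q ≤ lineDeg (greedySeq P i) (P i)) ∧
    C = greedySeq P k ∧ IsCapset C

/-- An affine hyperplane in `𝔽₃ⁿ`: the solution set of one nontrivial linear equation. -/
def IsHyperplane {n : ℕ} (H : Set (Fin n → ZMod 3)) : Prop :=
  ∃ (a : Fin n → ZMod 3) (b : ZMod 3), a ≠ 0 ∧ H = {x | ∑ i, a i * x i = b}

/-- `H₀, H₁, H₂` form a triple of parallel affine hyperplanes partitioning `𝔽₃ⁿ`
(`H₁` and `H₂` are the two hyperplanes parallel to `H₀`). -/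
def ParallelTriple {n : ℕ} (H₀ H₁ H₂ : Set (Fin n → ZMod 3)) : Prop :=
  ∃ (a : Fin n → ZMod 3) (b : ZMod 3), a ≠ 0 ∧
    H₀ = {x | ∑ i, a i * x i = b} ∧
    H₁ = {x | ∑ i, a i * x i = b + 1} ∧
    H₂ = {x | ∑ i, a i * x i = b + 2}


namespace GC6
variable {n : ℕ}
abbrev Pt (n : ℕ) := Fin n → ZMod 3

def lineThrough (P Q : Pt n) : Set (Pt n) := {x | ∃ t : ZMod 3, x = P + t • (Q - P)}

lemma self_mem_lineThrough (P Q : Pt n) : P ∈ lineThrough P Q := ⟨0, by simp⟩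

lemma mem_lineThrough (P Q : Pt n) : Q ∈ lineThrough P Q := ⟨1, by simp⟩

lemma isLine_lineThrough {P Q : Pt n} (h : Q ≠ P) : IsLine (lineThrough P Q) :=
  ⟨P, Q - P, sub_ne_zero.mpr h, rfl⟩

lemma param_inj {v : Pt n} (hv : v ≠ 0) {p : Pt n} {t s : ZMod 3}
    (h : p + t • v = p + s • v) : t = s := by
  have h2 : (t - s) • v = 0 := by
    have := add_left_cancel h
    rw [sub_smul, this, sub_self]
  rcases smul_eq_zero.mp h2 with h3 | h3
  · exact sub_eq_zero.mp h3
  · exact absurd h3 hv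

/-- uniqueness of the line through two distinct points -/
lemma line_eq_lineThrough {L : Set (Pt n)} (hL : IsLine L) {P Q : Pt n}
    (hP : P ∈ L) (hQ : Q ∈ L) (hPQ : Q ≠ P) : L = lineThrough P Q := by
  obtain ⟨p, v, hv, rfl⟩ := hL
  obtain ⟨s, rfl⟩ := hP
  obtain ⟨u, rfl⟩ := hQ
  have hsu : u - s ≠ 0 := by
    intro h
    exact hPQ (by rw [sub_eq_zero.mp h])
  have hQP : (p + u • v) - (p + s • v) = (u - s) • v := by
    rw [sub_smul]; abel
  ext x
  constructor
  · rintro ⟨t, rfl⟩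
    refine ⟨(t - s) * (u - s)⁻¹, ?_⟩
    rw [hQP, smul_smul, mul_assoc, inv_mul_cancel₀ hsu, mul_one, sub_smul]
    abel
  · rintro ⟨t, rfl⟩
    refine ⟨s + t * (u - s), ?_⟩
    rw [hQP, smul_smul, add_smul]
    abel

end GC6

namespace GC6
variable {n : ℕ}

def fval (a : Pt n) (x : Pt n) : ZMod 3 := ∑ i, a i * x i

lemma fval_add (a x y : Pt n) : fval a (x + y) = fval a x + fval a y := by
  simp [fval, mul_add, Finset.sum_add_distrib]

lemma fval_smul (a : Pt n) (t : ZMod 3) (x : Pt n) : fval a (t • x) = t * fval a x := by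
  simp [fval, Finset.mul_sum]; ring_nf
  exact Finset.sum_congr rfl fun i _ => by ring

lemma fval_sub (a x y : Pt n) : fval a (x - y) = fval a x - fval a y := by
  have := fval_add a (x - y) y
  rw [sub_add_cancel] at this
  linear_combination -this

lemma fval_param (a p v : Pt n) (t : ZMod 3) : fval a (p + t • v) = fval a p + t * fval a v := by
  rw [fval_add, fval_smul]

/-- a transversal line meets each fiber in exactly the given point -/
lemma trans_fiber_pt {a p v : Pt n} (hfv : fval a v ≠ 0) (c : ZMod 3) {x : Pt n}
    (hx : x ∈ {y : Pt n | ∃ t : ZMod 3, y = p + t • v}) (hc : fval a x = c) :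
    x = p + ((c - fval a p) * (fval a v)⁻¹) • v := by
  obtain ⟨t, rfl⟩ := hx
  rw [fval_param] at hc
  have : t = (c - fval a p) * (fval a v)⁻¹ := by
    field_simp
    linear_combination hc
  rw [this]

lemma exists_fval_one {a : Pt n} (ha : a ≠ 0) : ∃ w : Pt n, fval a w = 1 := by
  have : ∃ j, a j ≠ 0 := by
    by_contra h
    push_neg at h
    exact ha (funext fun i => h i)
  obtain ⟨j, hj⟩ := this
  refine ⟨fun i => if i = j then (a j)⁻¹ else 0, ?_⟩
  rw [fval, Finset.sum_eq_single j]
  · simp [mul_inv_cancel₀ hj]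
  · intro i _ hi; simp [hi]
  · simp

lemma ncard_fiber_succ (a : Pt n) (w : Pt n) (hw : fval a w = 1) (c : ZMod 3) :
    Set.ncard {x : Pt n | fval a x = c} = Set.ncard {x : Pt n | fval a x = c + 1} := by
  have : (fun x => x + w) '' {x : Pt n | fval a x = c} = {x : Pt n | fval a x = c + 1} := by
    ext x
    simp only [Set.mem_image, Set.mem_setOf_eq]
    constructor
    · rintro ⟨y, hy, rfl⟩; rw [fval_add, hy, hw]
    · intro hx; exact ⟨x - w, by rw [fval_sub, hx, hw]; ring, by abel⟩
  rw [← this, Set.ncard_image_of_injective _ (add_left_injective w)]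

lemma ncard_fiber_eq {a : Pt n} (ha : a ≠ 0) (c c' : ZMod 3) :
    Set.ncard {x : Pt n | fval a x = c} = Set.ncard {x : Pt n | fval a x = c'} := by
  obtain ⟨w, hw⟩ := exists_fval_one ha
  have key := ncard_fiber_succ a w hw
  have h1 : ∀ c, Set.ncard {x : Pt n | fval a x = c} = Set.ncard {x : Pt n | fval a x = c + 1} := key
  have e0 := h1 c
  have e1 := h1 (c+1)
  have e2 := h1 (c+1+1)
  have hc3 : c + 1 + 1 + 1 = c := by ring_nf; rw [show (3:ZMod 3) = 0 by decide]; ring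
  have : ∀ d : ZMod 3, d = c ∨ d = c + 1 ∨ d = c + 1 + 1 := by
    intro d
    have all3 : ∀ e : ZMod 3, e = 0 ∨ e = 1 ∨ e = 2 := by decide
    have : d - c = 0 ∨ d - c = 1 ∨ d - c = 2 := all3 _
    rcases this with h | h | h
    · left; linear_combination h
    · right; left; linear_combination h
    · right; right; linear_combination h
  rcases this c' with rfl | rfl | rfl
  · rfl
  · exact e0
  · rw [e0, e1]

end GC6

namespace GC6
variable {n : ℕ}

/-- lines through `P` inside the fiber of `P` -/
def infib (a : Pt n) (P : Pt n) : Set (Set (Pt n)) :=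
  {L | IsLine L ∧ P ∈ L ∧ ∀ x ∈ L, fval a x = fval a P}

lemma lineThrough_mem_form (P Q : Pt n) :
    lineThrough P Q = {x : Pt n | ∃ t : ZMod 3, x = P + t • (Q - P)} := rfl

/-- in a transversal line, points with equal `fval` are equal -/
lemma trans_fiber_unique {a p v : Pt n} (hfv : fval a v ≠ 0) {x y : Pt n}
    (hx : x ∈ {z : Pt n | ∃ t : ZMod 3, z = p + t • v})
    (hy : y ∈ {z : Pt n | ∃ t : ZMod 3, z = p + t • v})
    (h : fval a x = fval a y) : x = y := by
  rw [trans_fiber_pt hfv (fval a x) hx rfl, trans_fiber_pt hfv (fval a y) hy rfl, h]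

lemma fval_lineThrough_sub {a P Q : Pt n} : fval a (Q - P) = fval a Q - fval a P :=
  fval_sub a Q P

/-- decomposition of the line set through a point off the removed fiber -/
lemma lineSet_off {a : Pt n} {b : ZMod 3} {T : Set (Pt n)}
    (hT : T ⊆ {x | fval a x = b}) {Q : Pt n} (hQ : fval a Q ≠ b) :
    {L : Set (Pt n) | IsLine L ∧ Q ∈ L ∧ L ⊆ Set.univ \ T} =
      infib a Q ∪ (lineThrough Q '' ({x | fval a x = b} \ T)) := by
  ext L
  simp only [Set.mem_setOf_eq, Set.mem_union, Set.mem_image, infib]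
  constructor
  · rintro ⟨hL, hQL, hLS⟩
    obtain ⟨p, v, hv, rfl⟩ := hL
    by_cases hfv : fval a v = 0
    · left
      refine ⟨⟨p, v, hv, rfl⟩, hQL, ?_⟩
      rintro x ⟨t, rfl⟩
      obtain ⟨s, rfl⟩ := hQL
      rw [fval_param, fval_param, hfv, mul_zero, mul_zero]
    · right
      set R := p + ((b - fval a p) * (fval a v)⁻¹) • v with hR
      have hRL : R ∈ {z : Pt n | ∃ t : ZMod 3, z = p + t • v} := ⟨_, rfl⟩
      have hRb : fval a R = b := by
        rw [hR, fval_param]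
        field_simp
        ring
      have hRQ : R ≠ Q := fun h => hQ (by rw [← h, hRb])
      have hRT : R ∉ T := fun h => (hLS hRL).2 h
      refine ⟨R, ⟨hRb, hRT⟩, ?_⟩
      exact (line_eq_lineThrough ⟨p, v, hv, rfl⟩ hQL hRL hRQ).symm
  · rintro (⟨hL, hQL, hfib⟩ | ⟨R, ⟨hRb, hRT⟩, rfl⟩)
    · refine ⟨hL, hQL, fun x hx => ⟨trivial, fun hxT => ?_⟩⟩
      exact hQ (by rw [← hfib x hx]; exact hT hxT)
    · have hRQ : R ≠ Q := fun h => hQ (by rw [← h, hRb])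
      have hfv : fval a (R - Q) ≠ 0 := by
        rw [fval_lineThrough_sub, hRb]
        intro h
        exact hQ (by linear_combination -h)
      refine ⟨isLine_lineThrough hRQ, self_mem_lineThrough Q R, fun x hx => ⟨trivial, fun hxT => ?_⟩⟩
      have hxb : fval a x = b := hT hxT
      have : x = R := trans_fiber_unique hfv hx (mem_lineThrough Q R) (by rw [hxb, hRb])
      exact hRT (this ▸ hxT)

end GC6

namespace GC6
variable {n : ℕ}

lemma lineThrough_injOn_fiber {a : Pt n} {b : ZMod 3} {Q : Pt n} (hQ : fval a Q ≠ b) :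
    Set.InjOn (lineThrough Q) {x | fval a x = b} := by
  intro R hR R' hR' h
  have hfv : fval a (R - Q) ≠ 0 := by
    rw [fval_sub, hR]
    intro hh
    exact hQ (by linear_combination -hh)
  have hR'L : R' ∈ lineThrough Q R := h ▸ mem_lineThrough Q R'
  exact (trans_fiber_unique hfv hR'L (mem_lineThrough Q R) (by rw [hR, hR'])).symm

lemma lineDeg_off {a : Pt n} {b : ZMod 3} {T : Set (Pt n)}
    (hT : T ⊆ {x | fval a x = b}) {Q : Pt n} (hQ : fval a Q ≠ b) :
    lineDeg (Set.univ \ T) Q = (infib a Q).ncard + ({x : Pt n | fval a x = b} \ T).ncard := by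
  rw [lineDeg, lineSet_off hT hQ, Set.ncard_union_eq ?_ (Set.toFinite _) (Set.toFinite _),
    Set.ncard_image_of_injOn ((lineThrough_injOn_fiber hQ).mono Set.diff_subset)]
  rw [Set.disjoint_left]
  rintro L ⟨_, _, hfib⟩ ⟨R, ⟨hRb, _⟩, rfl⟩
  exact hQ ((hfib R (mem_lineThrough Q R)) ▸ hRb)

end GC6

namespace GC6
variable {n : ℕ}

lemma one_ne_zero' : (1 : ZMod 3) ≠ 0 := by decide

lemma lineDeg_on {a : Pt n} {b : ZMod 3} {T : Set (Pt n)}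
    (hT : T ⊆ {x | fval a x = b}) {P : Pt n} (hP : fval a P = b) (hPT : P ∉ T) :
    Set.ncard {x : Pt n | fval a x = b + 1} + (infib a P).ncard
      ≤ lineDeg (Set.univ \ T) P + T.ncard := by
  classical
  set A := lineThrough P '' {x : Pt n | fval a x = b + 1} with hA
  set M := {L ∈ infib a P | ∃ t ∈ T, t ∈ L} with hM
  set B := infib a P \ M with hB
  have hPb1 : fval a P ≠ b + 1 := by
    rw [hP]; intro h; exact one_ne_zero' (by linear_combination -h)
  -- A ∪ B is contained in the line set
  have hsub : A ∪ B ⊆ {L : Set (Pt n) | IsLine L ∧ P ∈ L ∧ L ⊆ Set.univ \ T} := by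
    rintro L (⟨R, hRb1, rfl⟩ | ⟨⟨hL, hPL, hfib⟩, hLM⟩)
    · have hRP : R ≠ P := fun h => hPb1 (by rw [← h, hRb1])
      have hfv : fval a (R - P) ≠ 0 := by
        rw [fval_sub, hRb1, hP]
        intro h
        exact one_ne_zero' (by linear_combination h)
      refine ⟨isLine_lineThrough hRP, self_mem_lineThrough P R, fun x hx => ⟨trivial, fun hxT => ?_⟩⟩
      have : x = P := trans_fiber_unique hfv hx (self_mem_lineThrough P R) (by rw [hT hxT, hP])
      exact hPT (this ▸ hxT)
    · refine ⟨hL, hPL, fun x hx => ⟨trivial, fun hxT => ?_⟩⟩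
      exact hLM ⟨⟨hL, hPL, hfib⟩, x, hxT, hx⟩
  -- A and B are disjoint
  have hdisj : Disjoint A B := by
    rw [Set.disjoint_left]
    rintro L ⟨R, hRb1, rfl⟩ ⟨⟨_, _, hfib⟩, _⟩
    have := hfib R (mem_lineThrough P R)
    rw [hP] at this
    exact hPb1 (by rw [← hRb1, this, hP])
  -- cardinality of A
  have hAcard : A.ncard = Set.ncard {x : Pt n | fval a x = b + 1} :=
    Set.ncard_image_of_injOn (lineThrough_injOn_fiber hPb1)
  -- M is small
  have hMcard : M.ncard ≤ T.ncard := by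
    have hMsub : M ⊆ lineThrough P '' T := by
      rintro L ⟨⟨hL, hPL, _⟩, t, htT, htL⟩
      have htP : t ≠ P := fun h => hPT (h ▸ htT)
      exact ⟨t, htT, (line_eq_lineThrough hL hPL htL htP).symm⟩
    calc M.ncard ≤ (lineThrough P '' T).ncard := Set.ncard_le_ncard hMsub (Set.toFinite _)
      _ ≤ T.ncard := Set.ncard_image_le (Set.toFinite _)
  have hMfib : M ⊆ infib a P := fun L hL => hL.1
  have hBcard : B.ncard + M.ncard = (infib a P).ncard := by
    rw [hB, Set.ncard_diff hMfib (Set.toFinite _)]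
    exact Nat.sub_add_cancel (Set.ncard_le_ncard hMfib (Set.toFinite _))
  have hdeg : A.ncard + B.ncard ≤ lineDeg (Set.univ \ T) P := by
    rw [← Set.ncard_union_eq hdisj (Set.toFinite _) (Set.toFinite _)]
    exact Set.ncard_le_ncard hsub (Set.toFinite _)
  omega

end GC6

namespace GC6
variable {n : ℕ}

lemma image_add_line {c : Pt n} {L : Set (Pt n)} (hL : IsLine L) :
    IsLine ((fun x => x + c) '' L) := by
  obtain ⟨p, v, hv, rfl⟩ := hL
  refine ⟨p + c, v, hv, ?_⟩
  ext y
  simp only [Set.mem_image, Set.mem_setOf_eq]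
  constructor
  · rintro ⟨x, ⟨t, rfl⟩, rfl⟩; exact ⟨t, by abel⟩
  · rintro ⟨t, rfl⟩; exact ⟨p + t • v, ⟨t, rfl⟩, by abel⟩

lemma infib_map (a P c : Pt n) :
    (fun L => (fun x => x + c) '' L) '' infib a P ⊆ infib a (P + c) := by
  rintro _ ⟨L, ⟨hL, hPL, hfib⟩, rfl⟩
  refine ⟨image_add_line hL, ⟨P, hPL, rfl⟩, ?_⟩
  rintro _ ⟨x, hx, rfl⟩
  rw [fval_add, fval_add, hfib x hx]

lemma infib_le (a P c : Pt n) : (infib a P).ncard ≤ (infib a (P + c)).ncard := by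
  have hinj : Function.Injective (fun L : Set (Pt n) => (fun x => x + c) '' L) :=
    Set.image_injective.mpr (add_left_injective c)
  calc (infib a P).ncard = ((fun L : Set (Pt n) => (fun x => x + c) '' L) '' infib a P).ncard :=
        (Set.ncard_image_of_injective _ hinj).symm
    _ ≤ (infib a (P + c)).ncard := Set.ncard_le_ncard (infib_map a P c) (Set.toFinite _)

lemma infib_ncard_eq (a P Q : Pt n) : (infib a P).ncard = (infib a Q).ncard := by
  refine le_antisymm ?_ ?_
  · have := infib_le a P (Q - P); rwa [add_sub_cancel] at this
  · have := infib_le a Q (P - Q); rwa [add_sub_cancel] at this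

lemma lineDeg_capset_zero {S : Set (Pt n)} (hS : ∀ L : Set (Pt n), IsLine L → ¬ L ⊆ S)
    (P : Pt n) : lineDeg S P = 0 := by
  rw [lineDeg, Set.ncard_eq_zero (Set.toFinite _)]
  ext L
  simp only [Set.mem_setOf_eq, Set.mem_empty_iff_false, iff_false]
  rintro ⟨hL, _, hLS⟩
  exact hS L hL hLS

end GC6

namespace GC6
variable {m n : ℕ} (φ : (Fin m → ZMod 3) →ᵃ[ZMod 3] (Fin n → ZMod 3))

lemma affine_param (p v : Pt m) (t : ZMod 3) :
    φ (p + t • v) = φ p + t • (φ.linear v) := by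
  have h := φ.map_vadd p (t • v)
  rw [vadd_eq_add, vadd_eq_add, add_comm, map_smul] at h
  rw [h, add_comm]

lemma affine_image_line (hφ : Function.Injective φ) {M : Set (Pt m)} (hM : IsLine M) :
    IsLine (φ '' M) := by
  obtain ⟨p, v, hv, rfl⟩ := hM
  refine ⟨φ p, φ.linear v, fun h => hv ((φ.linear_injective_iff.mpr hφ) (by rw [h, map_zero])), ?_⟩
  ext y
  simp only [Set.mem_image, Set.mem_setOf_eq]
  constructor
  · rintro ⟨x, ⟨t, rfl⟩, rfl⟩; exact ⟨t, affine_param φ p v t⟩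
  · rintro ⟨t, rfl⟩; exact ⟨p + t • v, ⟨t, rfl⟩, affine_param φ p v t⟩

lemma affine_preimage_line (hφ : Function.Injective φ) {L : Set (Pt n)}
    (hL : IsLine L) (hLr : L ⊆ Set.range φ) : IsLine (φ ⁻¹' L) := by
  obtain ⟨p, v, hv, rfl⟩ := hL
  obtain ⟨p₀, hp₀⟩ := hLr (show p ∈ {x : Pt n | ∃ t : ZMod 3, x = p + t • v} from ⟨0, by simp⟩)
  obtain ⟨q₀, hq₀⟩ := hLr (show p + v ∈ {x : Pt n | ∃ t : ZMod 3, x = p + t • v} from ⟨1, by simp⟩)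
  have hv' : v = φ q₀ - φ p₀ := by rw [hp₀, hq₀]; abel
  have hlin : φ q₀ - φ p₀ = φ.linear (q₀ - p₀) := by
    have hq := congrFun φ.decomp q₀
    have hp := congrFun φ.decomp p₀
    simp only [Pi.add_apply, Function.const_apply] at hq hp
    rw [hq, hp, map_sub]
    abel
  have hpq : q₀ - p₀ ≠ 0 := by
    intro h
    apply hv
    rw [hv', hlin, h, map_zero]
  refine ⟨p₀, q₀ - p₀, hpq, ?_⟩
  ext x
  simp only [Set.mem_preimage, Set.mem_setOf_eq]
  constructor
  · rintro ⟨t, ht⟩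
    refine ⟨t, hφ ?_⟩
    rw [ht, affine_param, ← hlin, ← hv', hp₀]
  · rintro ⟨t, rfl⟩
    exact ⟨t, by rw [affine_param, ← hlin, ← hv', hp₀]⟩

lemma affine_lineDeg (hφ : Function.Injective φ) {S : Set (Pt n)} (hS : S ⊆ Set.range φ)
    (x : Pt m) : lineDeg S (φ x) = lineDeg (φ ⁻¹' S) x := by
  rw [lineDeg, lineDeg]
  have himg : {M : Set (Pt m) | IsLine M ∧ x ∈ M ∧ M ⊆ φ ⁻¹' S} =
      (fun L => φ ⁻¹' L) '' {L : Set (Pt n) | IsLine L ∧ φ x ∈ L ∧ L ⊆ S} := by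
    ext M
    simp only [Set.mem_setOf_eq, Set.mem_image]
    constructor
    · rintro ⟨hM, hxM, hMS⟩
      refine ⟨φ '' M, ⟨affine_image_line φ hφ hM, ⟨x, hxM, rfl⟩, ?_⟩, ?_⟩
      · exact (Set.image_mono hMS).trans (Set.image_preimage_subset φ S)
      · rw [Set.preimage_image_eq _ hφ]
    · rintro ⟨L, ⟨hL, hxL, hLS⟩, rfl⟩
      exact ⟨affine_preimage_line φ hφ hL (hLS.trans hS), hxL, Set.preimage_mono hLS⟩
  rw [himg]
  rw [Set.ncard_image_of_injOn]
  rintro L ⟨_, _, hLS⟩ L' ⟨_, _, hLS'⟩ h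
  simp only at h
  rw [← Set.image_preimage_eq_of_subset (hLS.trans hS),
    ← Set.image_preimage_eq_of_subset (hLS'.trans hS), h]

lemma affine_image_capset (hφ : Function.Injective φ) {A : Set (Pt m)}
    (hA : ∀ M : Set (Pt m), IsLine M → ¬ M ⊆ A) :
    ∀ L : Set (Pt n), IsLine L → ¬ L ⊆ φ '' A := by
  intro L hL hLA
  have hLr : L ⊆ Set.range φ := hLA.trans (Set.image_subset_range φ A)
  apply hA (φ ⁻¹' L) (affine_preimage_line φ hφ hL hLr)
  intro x hx
  obtain ⟨y, hyA, hyx⟩ := hLA hx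
  rwa [← hφ hyx]

end GC6

namespace GC6
variable {n : ℕ}

lemma line_fib_or_trans (a : Pt n) {L : Set (Pt n)} (hL : IsLine L) :
    (∃ c, ∀ x ∈ L, fval a x = c) ∨ (∀ c, ∃ x ∈ L, fval a x = c) := by
  obtain ⟨p, v, hv, rfl⟩ := hL
  by_cases hfv : fval a v = 0
  · left
    refine ⟨fval a p, ?_⟩
    rintro x ⟨t, rfl⟩
    rw [fval_param, hfv, mul_zero, add_zero]
  · right
    intro c
    refine ⟨p + ((c - fval a p) * (fval a v)⁻¹) • v, ⟨_, rfl⟩, ?_⟩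
    rw [fval_param]
    field_simp
    ring

/-- if `S` avoids the fiber `b`, lines through `Q ∈ S` inside `S` stay in the fiber of `Q` -/
lemma lineSet_avoid {a : Pt n} {b : ZMod 3} {S : Set (Pt n)} (hS : ∀ x ∈ S, fval a x ≠ b)
    (Q : Pt n) :
    {L : Set (Pt n) | IsLine L ∧ Q ∈ L ∧ L ⊆ S} =
      {L : Set (Pt n) | IsLine L ∧ Q ∈ L ∧ L ⊆ S ∩ {x | fval a x = fval a Q}} := by
  ext L
  simp only [Set.mem_setOf_eq]
  constructor
  · rintro ⟨hL, hQL, hLS⟩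
    refine ⟨hL, hQL, fun x hx => ⟨hLS hx, ?_⟩⟩
    rcases line_fib_or_trans a hL with ⟨c, hc⟩ | htr
    · show fval a x = fval a Q
      rw [hc x hx, hc Q hQL]
    · obtain ⟨y, hyL, hyb⟩ := htr b
      exact absurd hyb (hS y (hLS hyL))
  · rintro ⟨hL, hQL, hLS⟩
    exact ⟨hL, hQL, fun x hx => (hLS hx).1⟩

lemma lineDeg_avoid {a : Pt n} {b : ZMod 3} {S : Set (Pt n)} (hS : ∀ x ∈ S, fval a x ≠ b)
    (Q : Pt n) : lineDeg S Q = lineDeg (S ∩ {x | fval a x = fval a Q}) Q := by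
  rw [lineDeg, lineDeg, lineSet_avoid hS]

end GC6

namespace GC6
variable {n : ℕ}

open Classical in
noncomputable def pick1 (a : Pt n) (b : ZMod 3) (U : Set (Pt n)) : Pt n :=
  if h : U.Nonempty then
    (Set.exists_max_image U (lineDeg (Set.univ \ ({x | fval a x = b} \ U)))
      (Set.toFinite U) h).choose
  else fun _ => 0

lemma pick1_mem {a : Pt n} {b : ZMod 3} {U : Set (Pt n)} (h : U.Nonempty) :
    pick1 a b U ∈ U := by
  classical
  rw [pick1, dif_pos h]
  exact (Set.exists_max_image U _ (Set.toFinite U) h).choose_spec.1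

lemma pick1_max {a : Pt n} {b : ZMod 3} {U : Set (Pt n)} (h : U.Nonempty) :
    ∀ Q ∈ U, lineDeg (Set.univ \ ({x | fval a x = b} \ U)) Q
      ≤ lineDeg (Set.univ \ ({x | fval a x = b} \ U)) (pick1 a b U) := by
  classical
  rw [pick1, dif_pos h]
  exact (Set.exists_max_image U _ (Set.toFinite U) h).choose_spec.2

noncomputable def st1 (a : Pt n) (b : ZMod 3) : ℕ → Set (Pt n)
  | 0 => {x | fval a x = b}
  | (i+1) => st1 a b i \ {pick1 a b (st1 a b i)}

lemma st1_subset (a : Pt n) (b : ZMod 3) (i : ℕ) : st1 a b i ⊆ {x | fval a x = b} := by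
  induction i with
  | zero => exact subset_rfl
  | succ i ih => exact Set.diff_subset.trans ih

lemma st1_ncard (a : Pt n) (b : ZMod 3) (i : ℕ)
    (hi : i ≤ Set.ncard {x : Pt n | fval a x = b}) :
    (st1 a b i).ncard + i = Set.ncard {x : Pt n | fval a x = b} := by
  induction i with
  | zero => simp [st1]
  | succ i ih =>
    have hi' : i ≤ Set.ncard {x : Pt n | fval a x = b} := Nat.le_of_succ_le hi
    have ihe := ih hi'
    have hne : (st1 a b i).Nonempty := by
      rw [Set.nonempty_iff_ne_empty]
      intro h
      rw [h, Set.ncard_empty] at ihe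
      omega
    have : (st1 a b (i+1)).ncard = (st1 a b i).ncard - 1 := by
      show (st1 a b i \ {pick1 a b (st1 a b i)}).ncard = _
      rw [Set.ncard_diff (Set.singleton_subset_iff.mpr (pick1_mem hne)) (Set.toFinite _),
        Set.ncard_singleton]
    omega

lemma st1_nonempty (a : Pt n) (b : ZMod 3) (i : ℕ)
    (hi : i < Set.ncard {x : Pt n | fval a x = b}) : (st1 a b i).Nonempty := by
  have := st1_ncard a b i (le_of_lt hi)
  rw [Set.nonempty_iff_ne_empty]
  intro h
  rw [h, Set.ncard_empty] at this
  omega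

lemma st1_last (a : Pt n) (b : ZMod 3) :
    st1 a b (Set.ncard {x : Pt n | fval a x = b}) = ∅ := by
  have := st1_ncard a b _ le_rfl
  have h0 : (st1 a b (Set.ncard {x : Pt n | fval a x = b})).ncard = 0 := by omega
  exact (Set.ncard_eq_zero (Set.toFinite _)).mp h0

def mseq (k₁ k₂ : ℕ) (d₁ d₂ : ℕ → ℕ) : ℕ → ℕ × ℕ
  | 0 => (0, 0)
  | (m+1) =>
    let s := mseq k₁ k₂ d₁ d₂ m
    if s.1 < k₁ ∧ (k₂ ≤ s.2 ∨ d₂ s.2 ≤ d₁ s.1) then (s.1 + 1, s.2) else (s.1, s.2 + 1)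

lemma mseq_inv (k₁ k₂ : ℕ) (d₁ d₂ : ℕ → ℕ) (m : ℕ) (hm : m ≤ k₁ + k₂) :
    (mseq k₁ k₂ d₁ d₂ m).1 ≤ k₁ ∧ (mseq k₁ k₂ d₁ d₂ m).2 ≤ k₂ ∧
      (mseq k₁ k₂ d₁ d₂ m).1 + (mseq k₁ k₂ d₁ d₂ m).2 = m := by
  induction m with
  | zero => simp [mseq]
  | succ m ih =>
    obtain ⟨h1, h2, h3⟩ := ih (Nat.le_of_succ_le hm)
    set s := mseq k₁ k₂ d₁ d₂ m with hs
    have hstep : mseq k₁ k₂ d₁ d₂ (m+1) =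
        if s.1 < k₁ ∧ (k₂ ≤ s.2 ∨ d₂ s.2 ≤ d₁ s.1) then (s.1 + 1, s.2) else (s.1, s.2 + 1) := rfl
    rw [hstep]
    split_ifs with hc
    · obtain ⟨hck, _⟩ := hc
      refine ⟨?_, ?_, ?_⟩ <;> simp <;> omega
    · push_neg at hc
      have hlt : s.2 < k₂ := by
        by_cases h : s.1 < k₁
        · exact (hc h).1
        · omega
      refine ⟨?_, ?_, ?_⟩ <;> simp <;> omega

end GC6

namespace GC6

lemma two_ne_zero' : (2 : ZMod 3) ≠ 0 := by decide

lemma zmod3_cases (b c : ZMod 3) : c = b ∨ c = b + 1 ∨ c = b + 2 := by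
  have all3 : ∀ e : ZMod 3, e = 0 ∨ e = 1 ∨ e = 2 := by decide
  rcases all3 (c - b) with h | h | h
  · left; linear_combination h
  · right; left; linear_combination h
  · right; right; linear_combination h

lemma lineDeg_union_image {m n : ℕ} (a : Pt n) (c₀ c₁ c₂ : ZMod 3)
    (h10 : c₁ ≠ c₀) (h20 : c₂ ≠ c₀) (h21 : c₂ ≠ c₁)
    (φ₁ φ₂ : (Fin m → ZMod 3) →ᵃ[ZMod 3] (Fin n → ZMod 3))
    (hφ₁ : Function.Injective φ₁)
    (hr₁ : ∀ x, fval a (φ₁ x) = c₁) (hr₂ : ∀ x, fval a (φ₂ x) = c₂)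
    (S₁ S₂ : Set (Pt m)) (y : Pt m) :
    lineDeg (φ₁ '' S₁ ∪ φ₂ '' S₂) (φ₁ y) = lineDeg S₁ y := by
  have havoid : ∀ x ∈ φ₁ '' S₁ ∪ φ₂ '' S₂, fval a x ≠ c₀ := by
    rintro x (⟨z, _, rfl⟩ | ⟨z, _, rfl⟩)
    · rw [hr₁]; exact h10
    · rw [hr₂]; exact h20
  have hinter : (φ₁ '' S₁ ∪ φ₂ '' S₂) ∩ {x | fval a x = fval a (φ₁ y)} = φ₁ '' S₁ := by
    ext x
    simp only [Set.mem_inter_iff, Set.mem_union, Set.mem_setOf_eq, hr₁ y]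
    constructor
    · rintro ⟨(hx | ⟨z, _, rfl⟩), hfx⟩
      · exact hx
      · exact absurd (hr₂ z ▸ hfx) h21
    · rintro ⟨z, hz, rfl⟩
      exact ⟨Or.inl ⟨z, hz, rfl⟩, hr₁ z⟩
  rw [lineDeg_avoid havoid, hinter,
    affine_lineDeg φ₁ hφ₁ (Set.image_subset_range φ₁ S₁) y, Set.preimage_image_eq _ hφ₁]

end GC6

namespace GC6

lemma union_image_remove {m n : ℕ} (φ₁ φ₂ : (Fin m → ZMod 3) →ᵃ[ZMod 3] (Fin n → ZMod 3))
    (hφ₁ : Function.Injective φ₁) (S₁ S₂ : Set (Pt m)) (x : Pt m)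
    (hx : φ₁ x ∉ φ₂ '' S₂) :
    (φ₁ '' S₁ ∪ φ₂ '' S₂) \ {φ₁ x} = φ₁ '' (S₁ \ {x}) ∪ φ₂ '' S₂ := by
  rw [Set.union_diff_distrib, Set.image_diff hφ₁, Set.image_singleton,
    Set.diff_singleton_eq_self hx]

end GC6

open GC6

/-- If `C ⊆ 𝔽₃ⁿ` (`n ≥ 1`) misses an affine hyperplane `H₀` and, for each of
the two parallel hyperplanes `H₁, H₂`, some affine bijection `φᵢ : 𝔽₃ⁿ⁻¹ → Hᵢ` pulls
`C ∩ Hᵢ` back to a greedy capset of `𝔽₃ⁿ⁻¹`, then `C` is a greedy capset of `𝔽₃ⁿ`. -/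
theorem greedy_capsets_stmt6 {n : ℕ} (hn : 1 ≤ n) (C : Set (Fin n → ZMod 3))
    (H₀ H₁ H₂ : Set (Fin n → ZMod 3)) (hpar : ParallelTriple H₀ H₁ H₂)
    (hdisj : C ∩ H₀ = ∅)
    (h1 : ∃ φ : (Fin (n - 1) → ZMod 3) →ᵃ[ZMod 3] (Fin n → ZMod 3),
      Function.Injective φ ∧ Set.range φ = H₁ ∧ IsGreedyCapset (φ ⁻¹' (C ∩ H₁)))
    (h2 : ∃ φ : (Fin (n - 1) → ZMod 3) →ᵃ[ZMod 3] (Fin n → ZMod 3),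
      Function.Injective φ ∧ Set.range φ = H₂ ∧ IsGreedyCapset (φ ⁻¹' (C ∩ H₂))) :
    IsGreedyCapset C := by
  classical
  obtain ⟨a, b, ha, hH₀, hH₁, hH₂⟩ := hpar
  obtain ⟨φ₁, hφ₁inj, hφ₁rng, hgc₁⟩ := h1
  obtain ⟨φ₂, hφ₂inj, hφ₂rng, hgc₂⟩ := h2
  unfold IsGreedyCapset at hgc₁ hgc₂
  obtain ⟨k₁, P₁, hg₁, hC₁eq, hC₁cap⟩ := hgc₁
  obtain ⟨k₂, P₂, hg₂, hC₂eq, hC₂cap⟩ := hgc₂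
  have hH₀' : H₀ = {x : Pt n | fval a x = b} := hH₀
  have hH₁' : H₁ = {x : Pt n | fval a x = b + 1} := hH₁
  have hH₂' : H₂ = {x : Pt n | fval a x = b + 2} := hH₂
  -- basic ZMod 3 facts
  have hz1 : (b + 1 : ZMod 3) ≠ b := fun h => one_ne_zero' (by linear_combination h)
  have hz2 : (b + 2 : ZMod 3) ≠ b := fun h => two_ne_zero' (by linear_combination h)
  have hz12 : (b + 2 : ZMod 3) ≠ b + 1 := fun h => one_ne_zero' (by linear_combination h)
  -- fval on ranges
  have hfval₁ : ∀ x, fval a (φ₁ x) = b + 1 := by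
    intro x
    have h : φ₁ x ∈ H₁ := hφ₁rng ▸ Set.mem_range_self x
    rw [hH₁'] at h
    exact h
  have hfval₂ : ∀ x, fval a (φ₂ x) = b + 2 := by
    intro x
    have h : φ₂ x ∈ H₂ := hφ₂rng ▸ Set.mem_range_self x
    rw [hH₂'] at h
    exact h
  have hnotb : ∀ x ∈ C, fval a x ≠ b := by
    intro x hx h
    have : x ∈ C ∩ H₀ := ⟨hx, by rw [hH₀']; exact h⟩
    rw [hdisj] at this
    exact this
  set N := Set.ncard {x : Pt n | fval a x = b} with hN
  set d₁ : ℕ → ℕ := fun i => lineDeg (greedySeq P₁ i) (P₁ i) with hd₁def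
  set d₂ : ℕ → ℕ := fun i => lineDeg (greedySeq P₂ i) (P₂ i) with hd₂def
  set σ := mseq k₁ k₂ d₁ d₂ with hσdef
  set P : ℕ → (Fin n → ZMod 3) := fun j =>
    if j < N then pick1 a b (st1 a b j)
    else if (σ (j - N)).1 < k₁ ∧ (k₂ ≤ (σ (j - N)).2 ∨ d₂ (σ (j - N)).2 ≤ d₁ (σ (j - N)).1)
      then φ₁ (P₁ (σ (j - N)).1) else φ₂ (P₂ (σ (j - N)).2) with hPdef
  -- phase 1 invariant
  have hseq1 : ∀ i ≤ N, greedySeq P i = Set.univ \ ({x | fval a x = b} \ st1 a b i) := by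
    intro i
    induction i with
    | zero =>
      intro _
      rw [show st1 a b 0 = {x : Pt n | fval a x = b} from rfl, Set.diff_self, Set.diff_empty]
      rfl
    | succ i ih =>
      intro hi
      have hi' : i < N := hi
      have hne : (st1 a b i).Nonempty := st1_nonempty a b i (hN ▸ hi')
      have hPi : P i = pick1 a b (st1 a b i) := by
        simp only [hPdef]
        rw [if_pos hi']
      have hstep : greedySeq P (i+1) = greedySeq P i \ {P i} := rfl
      rw [hstep, ih hi'.le, hPi,
        show st1 a b (i+1) = st1 a b i \ {pick1 a b (st1 a b i)} from rfl]
      have hpick : pick1 a b (st1 a b i) ∈ st1 a b i := pick1_mem hne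
      have hpb : fval a (pick1 a b (st1 a b i)) = b := st1_subset a b i hpick
      ext x
      simp only [Set.mem_diff, Set.mem_univ, true_and, Set.mem_singleton_iff, Set.mem_setOf_eq]
      by_cases hxp : x = pick1 a b (st1 a b i)
      · subst hxp
        tauto
      · tauto
  -- phase 2 invariant
  have hseq2 : ∀ m : ℕ, greedySeq P (N + m) =
      φ₁ '' (greedySeq P₁ (σ m).1) ∪ φ₂ '' (greedySeq P₂ (σ m).2) := by
    intro m
    induction m with
    | zero =>
      have h0 : greedySeq P N = Set.univ \ {x : Pt n | fval a x = b} := by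
        rw [hseq1 N le_rfl]
        have hlast : st1 a b N = ∅ := by rw [hN]; exact st1_last a b
        rw [hlast, Set.diff_empty]
      rw [Nat.add_zero, h0]
      show _ = φ₁ '' (greedySeq P₁ 0) ∪ φ₂ '' (greedySeq P₂ 0)
      show _ = φ₁ '' Set.univ ∪ φ₂ '' Set.univ
      rw [Set.image_univ, Set.image_univ, hφ₁rng, hφ₂rng, hH₁', hH₂']
      ext x
      simp only [Set.mem_diff, Set.mem_univ, true_and, Set.mem_setOf_eq, Set.mem_union]
      constructor
      · intro hx
        rcases zmod3_cases b (fval a x) with h | h | h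
        · exact absurd h hx
        · exact Or.inl h
        · exact Or.inr h
      · rintro (h | h) <;> rw [h]
        · exact hz1
        · exact hz2
    | succ m ih =>
      have hstep : greedySeq P (N + (m+1)) = greedySeq P (N + m) \ {P (N + m)} := rfl
      have hPm : P (N + m) =
          if (σ m).1 < k₁ ∧ (k₂ ≤ (σ m).2 ∨ d₂ (σ m).2 ≤ d₁ (σ m).1)
          then φ₁ (P₁ (σ m).1) else φ₂ (P₂ (σ m).2) := by
        simp only [hPdef]
        rw [if_neg (by omega), Nat.add_sub_cancel_left]
      have hσstep : σ (m+1) =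
          if (σ m).1 < k₁ ∧ (k₂ ≤ (σ m).2 ∨ d₂ (σ m).2 ≤ d₁ (σ m).1)
          then ((σ m).1 + 1, (σ m).2) else ((σ m).1, (σ m).2 + 1) := rfl
      rw [hstep, ih, hPm, hσstep]
      by_cases hc : (σ m).1 < k₁ ∧ (k₂ ≤ (σ m).2 ∨ d₂ (σ m).2 ≤ d₁ (σ m).1)
      · rw [if_pos hc, if_pos hc]
        have hnot : φ₁ (P₁ (σ m).1) ∉ φ₂ '' (greedySeq P₂ (σ m).2) := by
          rintro ⟨z, _, hz⟩
          have hv := hfval₂ z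
          rw [hz, hfval₁] at hv
          exact hz12 hv.symm
        rw [union_image_remove φ₁ φ₂ hφ₁inj _ _ _ hnot]
        rfl
      · rw [if_neg hc, if_neg hc, Set.union_comm (φ₁ '' _), Set.union_comm (φ₁ '' _)]
        have hnot : φ₂ (P₂ (σ m).2) ∉ φ₁ '' (greedySeq P₁ (σ m).1) := by
          rintro ⟨z, _, hz⟩
          have hv := hfval₁ z
          rw [hz, hfval₂] at hv
          exact hz12 hv
        rw [union_image_remove φ₂ φ₁ hφ₂inj _ _ _ hnot]
        rfl
  -- capset images
  have himg₁ : φ₁ '' (⇑φ₁ ⁻¹' (C ∩ H₁)) = C ∩ H₁ :=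
    Set.image_preimage_eq_of_subset (by rw [hφ₁rng]; exact Set.inter_subset_right)
  have himg₂ : φ₂ '' (⇑φ₂ ⁻¹' (C ∩ H₂)) = C ∩ H₂ :=
    Set.image_preimage_eq_of_subset (by rw [hφ₂rng]; exact Set.inter_subset_right)
  -- C is a capset
  have hCcap : IsCapset C := by
    intro L hL hLC
    rcases line_fib_or_trans a hL with ⟨c, hc⟩ | htr
    · obtain ⟨p, v, hv, hLe⟩ := hL
      have hpL : p ∈ L := by rw [hLe]; exact ⟨0, by simp⟩
      have hpC : p ∈ C := hLC hpL
      rcases zmod3_cases b (fval a p) with h | h | h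
      · exact hnotb p hpC h
      · refine affine_image_capset φ₁ hφ₁inj hC₁cap L ⟨p, v, hv, hLe⟩ ?_
        rw [himg₁]
        intro x hx
        refine ⟨hLC hx, ?_⟩
        rw [hH₁']
        show fval a x = b + 1
        rw [hc x hx, ← hc p hpL, h]
      · refine affine_image_capset φ₂ hφ₂inj hC₂cap L ⟨p, v, hv, hLe⟩ ?_
        rw [himg₂]
        intro x hx
        refine ⟨hLC hx, ?_⟩
        rw [hH₂']
        show fval a x = b + 2
        rw [hc x hx, ← hc p hpL, h]
    · obtain ⟨x, hxL, hxb⟩ := htr b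
      exact hnotb x (hLC hxL) hxb
  refine ⟨N + (k₁ + k₂), P, ?_, ?_, hCcap⟩
  · -- the greedy conditions
    intro i hi
    by_cases hiN : i < N
    · -- phase 1
      have hne : (st1 a b i).Nonempty := st1_nonempty a b i (hN ▸ hiN)
      have hPi : P i = pick1 a b (st1 a b i) := by
        simp only [hPdef]
        rw [if_pos hiN]
      have hSi := hseq1 i hiN.le
      have hTsub : {x : Pt n | fval a x = b} \ st1 a b i ⊆ {x | fval a x = b} :=
        Set.diff_subset
      have hUsub := st1_subset a b i
      have hpmem : pick1 a b (st1 a b i) ∈ st1 a b i := pick1_mem hne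
      have hpb : fval a (pick1 a b (st1 a b i)) = b := hUsub hpmem
      have hpT : pick1 a b (st1 a b i) ∉ {x : Pt n | fval a x = b} \ st1 a b i :=
        fun h => h.2 hpmem
      have hFbdiff : {x : Pt n | fval a x = b} \ ({x : Pt n | fval a x = b} \ st1 a b i) = st1 a b i :=
        Set.diff_diff_cancel_left hUsub
      have hTcard : ({x : Pt n | fval a x = b} \ st1 a b i).ncard
          + (st1 a b i).ncard = N := by
        rw [Set.ncard_diff hUsub (Set.toFinite _), hN]
        have := Set.ncard_le_ncard hUsub (Set.toFinite _)
        omega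
      have hf1 : Set.ncard {x : Pt n | fval a x = b + 1}
          = Set.ncard {x : Pt n | fval a x = b} := ncard_fiber_eq ha _ _
      have hUpos : 0 < (st1 a b i).ncard := (Set.ncard_pos (Set.toFinite _)).mpr hne
      have hlow := lineDeg_on hTsub hpb hpT
      rw [hSi, hPi]
      refine ⟨⟨trivial, hpT⟩, ?_, ?_⟩
      · have := hN
        omega
      · intro Q hQ
        by_cases hQb : fval a Q = b
        · have hQU : Q ∈ st1 a b i := by
            by_contra hQU
            exact hQ.2 ⟨hQb, hQU⟩
          exact pick1_max hne Q hQU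
        · have hQdeg := lineDeg_off hTsub hQb
          rw [hFbdiff] at hQdeg
          have hinfib := infib_ncard_eq a Q (pick1 a b (st1 a b i))
          have := hN
          omega
    · -- phase 2
      have hiN' : N ≤ i := not_lt.mp hiN
      set m := i - N with hm
      have him : i = N + m := by omega
      have hmK : m < k₁ + k₂ := by omega
      obtain ⟨hσ1, hσ2, hσsum⟩ := mseq_inv k₁ k₂ d₁ d₂ m (le_of_lt hmK)
      rw [← hσdef] at hσ1 hσ2 hσsum
      have hgs : greedySeq P i = ⇑φ₁ '' greedySeq P₁ (σ m).1 ∪ ⇑φ₂ '' greedySeq P₂ (σ m).2 := by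
        rw [him]; exact hseq2 m
      have hPi : P i = if (σ m).1 < k₁ ∧ (k₂ ≤ (σ m).2 ∨ d₂ (σ m).2 ≤ d₁ (σ m).1)
          then φ₁ (P₁ (σ m).1) else φ₂ (P₂ (σ m).2) := by
        simp only [hPdef]
        rw [if_neg (by omega), ← hm]
      have hdeq₁ : ∀ (S₁ S₂ : Set (Fin (n-1) → ZMod 3)) (y : Fin (n-1) → ZMod 3),
          lineDeg (φ₁ '' S₁ ∪ φ₂ '' S₂) (φ₁ y) = lineDeg S₁ y :=
        fun S₁ S₂ y => lineDeg_union_image a b (b+1) (b+2) hz1 hz2 hz12 φ₁ φ₂ hφ₁inj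
          hfval₁ hfval₂ S₁ S₂ y
      have hdeq₂ : ∀ (S₁ S₂ : Set (Fin (n-1) → ZMod 3)) (y : Fin (n-1) → ZMod 3),
          lineDeg (φ₁ '' S₁ ∪ φ₂ '' S₂) (φ₂ y) = lineDeg S₂ y := by
        intro S₁ S₂ y
        rw [Set.union_comm]
        exact lineDeg_union_image a b (b+2) (b+1) hz2 hz1 (fun h => hz12 h.symm) φ₂ φ₁
          hφ₂inj hfval₂ hfval₁ S₂ S₁ y
      rw [hgs, hPi]
      by_cases hc : (σ m).1 < k₁ ∧ (k₂ ≤ (σ m).2 ∨ d₂ (σ m).2 ≤ d₁ (σ m).1)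
      · rw [if_pos hc]
        obtain ⟨hm1, hdeg1, hmax1⟩ := hg₁ (σ m).1 hc.1
        refine ⟨Set.mem_union_left _ (Set.mem_image_of_mem _ hm1), ?_, ?_⟩
        · rw [hdeq₁]
          exact hdeg1
        · rintro Q (⟨y, hy, rfl⟩ | ⟨y, hy, rfl⟩)
          · rw [hdeq₁, hdeq₁]
            exact hmax1 y hy
          · rw [hdeq₂, hdeq₁]
            rcases Nat.lt_or_ge (σ m).2 k₂ with h2 | h2
            · have hle := (hg₂ (σ m).2 h2).2.2 y hy
              have hcd : d₂ (σ m).2 ≤ d₁ (σ m).1 := hc.2.resolve_left (by omega)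
              exact le_trans hle hcd
            · have h2e : (σ m).2 = k₂ := le_antisymm hσ2 h2
              rw [h2e, ← hC₂eq, lineDeg_capset_zero hC₂cap y]
              exact Nat.zero_le _
      · rw [if_neg hc]
        push_neg at hc
        have h2lt : (σ m).2 < k₂ := by
          rcases Nat.lt_or_ge (σ m).1 k₁ with h | h
          · exact (hc h).1
          · omega
        obtain ⟨hm2, hdeg2, hmax2⟩ := hg₂ (σ m).2 h2lt
        refine ⟨Set.mem_union_right _ (Set.mem_image_of_mem _ hm2), ?_, ?_⟩
        · rw [hdeq₂]
          exact hdeg2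
        · rintro Q (⟨y, hy, rfl⟩ | ⟨y, hy, rfl⟩)
          · rw [hdeq₁, hdeq₂]
            rcases Nat.lt_or_ge (σ m).1 k₁ with h1 | h1
            · have hle := (hg₁ (σ m).1 h1).2.2 y hy
              exact le_trans hle (le_of_lt (hc h1).2)
            · have h1e : (σ m).1 = k₁ := le_antisymm hσ1 h1
              rw [h1e, ← hC₁eq, lineDeg_capset_zero hC₁cap y]
              exact Nat.zero_le _
          · rw [hdeq₂, hdeq₂]
            exact hmax2 y hy
  · -- C equals the final set
    obtain ⟨u1, u2, u3⟩ := mseq_inv k₁ k₂ d₁ d₂ (k₁ + k₂) le_rfl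
    rw [← hσdef] at u1 u2 u3
    have hσKe : σ (k₁ + k₂) = (k₁, k₂) := by
      have e1 : (σ (k₁ + k₂)).1 = k₁ := by omega
      have e2 : (σ (k₁ + k₂)).2 = k₂ := by omega
      exact Prod.ext_iff.mpr ⟨e1, e2⟩
    rw [hseq2 (k₁ + k₂), hσKe]
    show C = φ₁ '' greedySeq P₁ k₁ ∪ φ₂ '' greedySeq P₂ k₂
    rw [← hC₁eq, ← hC₂eq, himg₁, himg₂]
    ext x
    constructor
    · intro hx
      rcases zmod3_cases b (fval a x) with h | h | h
      · exact absurd h (hnotb x hx)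
      · exact Or.inl ⟨hx, by rw [hH₁']; exact h⟩
      · exact Or.inr ⟨hx, by rw [hH₂']; exact h⟩
    · rintro (⟨h, _⟩ | ⟨h, _⟩) <;> exact h
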